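/- For all positive integers a, b and every natural number ℓ: ∑_{j=1}^{a} (a!/(a-j)!)·∑_{i=j}^{ℓ} binom(ℓ,i)·b^i·S(i,j) = ∑_{j=1}^{b} (b!/(b-j)!)·∑_{i=j}^{ℓ} binom(ℓ,i)·a^i·S(i,j), where S denotes Stirling numbers of the second kind. -/

import Mathlib

/-- Stirling numbers of the second kind. -/
def stirling2 : ℕ → ℕ → ℕ
  | 0, 0 => 1
  | 0, _ + 1 => 0
  | _ + 1, 0 => 0
  | n + 1, k + 1 => stirling2 n k + (k + 1) * stirling2 n (k + 1)

lemma stirling2_eq_zero_of_lt : ∀ {n k : ℕ}, n < k → stirling2 n k = 0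
  | 0, _ + 1, _ => rfl
  | n + 1, k + 1, h => by
    have h1 : n < k := Nat.lt_of_succ_lt_succ h
    have h2 : n < k + 1 := Nat.lt_of_succ_lt h
    simp [stirling2, stirling2_eq_zero_of_lt h1, stirling2_eq_zero_of_lt h2]

lemma stirling2_zero_right {n : ℕ} (hn : 0 < n) : stirling2 n 0 = 0 := by
  obtain ⟨m, rfl⟩ : ∃ m, n = m + 1 := ⟨n - 1, by omega⟩
  rfl

lemma desc_step (a j : ℕ) : a.descFactorial (j + 1) + j * a.descFactorial j
    = a * a.descFactorial j := by
  rcases le_or_gt j a with h | h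
  · rw [Nat.descFactorial_succ, ← add_mul, Nat.sub_add_cancel h]
  · simp [Nat.descFactorial_eq_zero_iff_lt.2 h]

lemma key (a : ℕ) : ∀ i, ∑ j ∈ Finset.range (i + 1),
    a.descFactorial j * stirling2 i j = a ^ i := by
  intro i
  induction i with
  | zero => simp [stirling2]
  | succ i ih =>
    rw [Finset.sum_range_succ']
    have h0 : a.descFactorial 0 * stirling2 (i + 1) 0 = 0 := by
      simp [stirling2_zero_right (Nat.succ_pos i)]
    rw [h0, add_zero]
    have hexp : ∀ j, a.descFactorial (j + 1) * stirling2 (i + 1) (j + 1)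
        = a.descFactorial (j + 1) * stirling2 i j
          + a.descFactorial (j + 1) * ((j + 1) * stirling2 i (j + 1)) := by
      intro j; rw [show stirling2 (i+1) (j+1) = stirling2 i j + (j+1) * stirling2 i (j+1) from rfl]
      ring
    rw [Finset.sum_congr rfl (fun j _ => hexp j), Finset.sum_add_distrib]
    have hshift : ∑ j ∈ Finset.range (i + 1),
        a.descFactorial (j + 1) * ((j + 1) * stirling2 i (j + 1))
        = ∑ j ∈ Finset.range (i + 1), j * a.descFactorial j * stirling2 i j := by
      have e1 : ∑ j ∈ Finset.range (i + 2), a.descFactorial j * (j * stirling2 i j)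
          = ∑ j ∈ Finset.range (i + 1), a.descFactorial (j + 1) * ((j + 1) * stirling2 i (j + 1)) := by
        rw [Finset.sum_range_succ']; simp
      have e2 : ∑ j ∈ Finset.range (i + 2), a.descFactorial j * (j * stirling2 i j)
          = ∑ j ∈ Finset.range (i + 1), a.descFactorial j * (j * stirling2 i j) := by
        rw [Finset.sum_range_succ, stirling2_eq_zero_of_lt (Nat.lt_succ_self i)]
        simp
      rw [← e1, e2]
      exact Finset.sum_congr rfl fun j _ => by ring
    rw [hshift, ← Finset.sum_add_distrib]
    have : ∀ j, a.descFactorial (j + 1) * stirling2 i j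
        + j * a.descFactorial j * stirling2 i j
        = a * (a.descFactorial j * stirling2 i j) := by
      intro j
      rw [← add_mul, desc_step]; ring
    rw [Finset.sum_congr rfl (fun j _ => this j), ← Finset.mul_sum, ih]
    ring

lemma key' (x i : ℕ) (hi : 0 < i) :
    ∑ j ∈ Finset.Icc 1 x, x.descFactorial j * stirling2 i j = x ^ i := by
  set N := max x i with hN
  have h1 : ∑ j ∈ Finset.Icc 1 x, x.descFactorial j * stirling2 i j
      = ∑ j ∈ Finset.Icc 0 N, x.descFactorial j * stirling2 i j := by
    apply Finset.sum_subset
    · intro j hj; simp only [Finset.mem_Icc] at *; omega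
    · intro j hj hj'
      simp only [Finset.mem_Icc] at hj hj'
      rcases Nat.eq_zero_or_pos j with rfl | hjpos
      · simp [stirling2_zero_right hi]
      · have : x < j := by omega
        simp [Nat.descFactorial_eq_zero_iff_lt.2 this]
  have h2 : ∑ j ∈ Finset.range (i + 1), x.descFactorial j * stirling2 i j
      = ∑ j ∈ Finset.Icc 0 N, x.descFactorial j * stirling2 i j := by
    apply Finset.sum_subset
    · intro j hj; simp only [Finset.mem_range, Finset.mem_Icc] at *; omega
    · intro j hj hj'
      simp only [Finset.mem_range, Finset.mem_Icc] at hj hj'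
      have : i < j := by omega
      simp [stirling2_eq_zero_of_lt this]
  rw [h1, ← h2, key]

lemma side (x y l : ℕ) :
    ∑ j ∈ Finset.Icc 1 x, x.descFactorial j *
        ∑ i ∈ Finset.Icc j l, l.choose i * y ^ i * stirling2 i j
    = ∑ i ∈ Finset.Icc 1 l, l.choose i * y ^ i * x ^ i := by
  have hinner : ∀ j ∈ Finset.Icc 1 x,
      ∑ i ∈ Finset.Icc j l, l.choose i * y ^ i * stirling2 i j
      = ∑ i ∈ Finset.Icc 1 l, l.choose i * y ^ i * stirling2 i j := by
    intro j hj
    simp only [Finset.mem_Icc] at hj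
    apply Finset.sum_subset
    · intro i hi; simp only [Finset.mem_Icc] at *; omega
    · intro i hi hi'
      simp only [Finset.mem_Icc] at hi hi'
      have : i < j := by omega
      simp [stirling2_eq_zero_of_lt this]
  rw [show (∑ j ∈ Finset.Icc 1 x, x.descFactorial j *
        ∑ i ∈ Finset.Icc j l, l.choose i * y ^ i * stirling2 i j)
      = ∑ j ∈ Finset.Icc 1 x, x.descFactorial j *
        ∑ i ∈ Finset.Icc 1 l, l.choose i * y ^ i * stirling2 i j from
    Finset.sum_congr rfl fun j hj => by rw [hinner j hj]]
  simp_rw [Finset.mul_sum]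
  rw [Finset.sum_comm]
  refine Finset.sum_congr rfl fun i hi => ?_
  simp only [Finset.mem_Icc] at hi
  have : ∀ j, x.descFactorial j * (l.choose i * y ^ i * stirling2 i j)
      = l.choose i * y ^ i * (x.descFactorial j * stirling2 i j) := fun j => by ring
  rw [Finset.sum_congr rfl (fun j _ => this j), ← Finset.mul_sum, key' x i hi.1]

theorem stirling2_symmetric_relation (a b : ℕ) (ha : 0 < a) (hb : 0 < b) (l : ℕ) :
    ∑ j ∈ Finset.Icc 1 a, a.descFactorial j *
        ∑ i ∈ Finset.Icc j l, l.choose i * b ^ i * stirling2 i j =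
      ∑ j ∈ Finset.Icc 1 b, b.descFactorial j *
        ∑ i ∈ Finset.Icc j l, l.choose i * a ^ i * stirling2 i j := by
  rw [side a b l, side b a l]
  exact Finset.sum_congr rfl fun i _ => by ring
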